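/- For all n ≥ 1, the difference q(n+1) - q(n) is either 2 or 3. -/
import Mathlib


/-- Wythoff sequences: `p 1 = 1`, `q n = p n + n` for `n ≥ 1`, and `p (n+1)` is the
smallest positive integer not contained in `U_n = {p 1, …, p n, q 1, …, q n}`. -/

theorem stmt_4 (p q : ℕ → ℕ)
    (hp1 : p 1 = 1)
    (hq : ∀ n, 1 ≤ n → q n = p n + n)
    (hmin : ∀ n, 1 ≤ n →
      IsLeast {m : ℕ | 0 < m ∧ ∀ i, 1 ≤ i → i ≤ n → m ≠ p i ∧ m ≠ q i} (p (n + 1))) :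
    ∀ n, 1 ≤ n → q (n + 1) = q n + 2 ∨ q (n + 1) = q n + 3 := by
  have hstep : ∀ n, 1 ≤ n → p n < p (n + 1) := by
    intro n hn
    obtain ⟨⟨hpos, hne⟩, _⟩ := hmin n hn
    rcases Nat.lt_or_ge n 2 with h | h
    · interval_cases n
      have h2 := (hne 1 le_rfl le_rfl).1
      rw [hp1] at h2 ⊢
      omega
    · obtain ⟨m, rfl⟩ : ∃ m, n = m + 1 := ⟨n - 1, by omega⟩
      have hm : 1 ≤ m := by omega
      have hle := (hmin m hm).2 ⟨hpos, fun i h1 h2 => hne i h1 (by omega)⟩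
      have := (hne (m + 1) (by omega) le_rfl).1
      omega
  have hmono : ∀ i j, 1 ≤ i → i ≤ j → p i ≤ p j := by
    intro i j h1 h2
    induction h2 with
    | refl => exact le_rfl
    | @step k h ih => exact le_trans ih (le_of_lt (hstep k (le_trans h1 h)))
  have hqmono : ∀ i j, 1 ≤ i → i < j → q i + 2 ≤ q j := by
    intro i j h1 h2
    have h3 : 1 ≤ j := by omega
    rw [hq i h1, hq j h3]
    have := hmono (i + 1) j (by omega) h2
    have := hstep i h1
    omega
  intro n hn
  obtain ⟨⟨hpos, hne⟩, hleast⟩ := hmin n hn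
  have hgt : p n < p (n + 1) := hstep n hn
  have hpn1 : q (n + 1) = p (n + 1) + (n + 1) := hq (n + 1) (by omega)
  have hpn : q n = p n + n := hq n hn
  by_cases hc : ∃ i, 1 ≤ i ∧ i ≤ n ∧ p n + 1 = q i
  · obtain ⟨i, hi1, hi2, hqi⟩ := hc
    right
    have hmem : p n + 2 ∈ {m : ℕ | 0 < m ∧ ∀ i, 1 ≤ i → i ≤ n → m ≠ p i ∧ m ≠ q i} := by
      refine ⟨by omega, fun j hj1 hj2 => ⟨?_, ?_⟩⟩
      · have := hmono j n hj1 hj2; omega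
      · intro hqj
        rcases lt_trichotomy i j with h | h | h
        · have := hqmono i j hi1 h; omega
        · subst h; omega
        · have := hqmono j i hj1 h; omega
    have hle := hleast hmem
    have hne1 : p (n + 1) ≠ p n + 1 := by
      rw [hqi]; exact (hne i hi1 hi2).2
    omega
  · left
    push_neg at hc
    have hmem : p n + 1 ∈ {m : ℕ | 0 < m ∧ ∀ i, 1 ≤ i → i ≤ n → m ≠ p i ∧ m ≠ q i} := by
      refine ⟨by omega, fun j hj1 hj2 => ⟨?_, hc j hj1 hj2⟩⟩
      have := hmono j n hj1 hj2; omega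
    have hle := hleast hmem
    omega
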